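/- Fix a preorder α, let ℕ∞ = WithTop ℕ and ℕ₁∞ = {n : ℕ∞ // 1 ≤ n}, and consider lower sets of the preorder PUnit ⊕ (α × ℕ₁∞ × ℕ₁∞). Define size X = ⨆ { (n₀ : ℕ∞) + (n₁ : ℕ∞) | ∃ a : α, Sum.inr (a, n₀, n₁) ∈ X }, the tree constructor Cons X = 1 + size X ∈ ℕ₁∞, and the destructor Dest x = sSup { X | Cons X ≤ x } for x : ℕ₁∞, suprema of lower sets being unions. Then for every x : ℕ₁∞, Dest x equals, as a subset of PUnit ⊕ (α × ℕ₁∞ × ℕ₁∞), the set { Sum.inl u | u : PUnit } ∪ { Sum.inr (a, n₀, n₁) | a : α, 1 + (n₀ : ℕ∞) + (n₁ : ℕ∞) ≤ (x : ℕ∞) }. -/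

import Mathlib

/-- `ℕ₁∞`: extended naturals that are at least 1 (sizes of inductive values). -/
abbrev Nat1Inf : Type := {n : WithTop ℕ // 1 ≤ n}

/-- The size of the data from which a binary tree is constructed: the supremum
of the sums of the sizes of the two subtrees occurring in the lower set `X`. -/
noncomputable def treeSize {α : Type*} [Preorder α]
    (X : LowerSet (PUnit ⊕ (α × Nat1Inf × Nat1Inf))) : WithTop ℕ :=
  ⨆ p ∈ {p : Nat1Inf × Nat1Inf | ∃ a : α, Sum.inr (a, p.1, p.2) ∈ X},
    ((p.1 : WithTop ℕ) + (p.2 : WithTop ℕ))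

/-- The semantic tree constructor in the constructor-size-counting model. -/
noncomputable def treeCons {α : Type*} [Preorder α]
    (X : LowerSet (PUnit ⊕ (α × Nat1Inf × Nat1Inf))) : Nat1Inf :=
  ⟨1 + treeSize X, le_add_of_nonneg_right zero_le⟩

/-- The semantic tree destructor in the constructor-size-counting model. -/
noncomputable def treeDest {α : Type*} [Preorder α] (x : Nat1Inf) :
    LowerSet (PUnit ⊕ (α × Nat1Inf × Nat1Inf)) :=
  sSup {X : LowerSet (PUnit ⊕ (α × Nat1Inf × Nat1Inf)) | treeCons X ≤ x}

theorem stmt_11 {α : Type*} [Preorder α] :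
    ∀ x : Nat1Inf,
      (treeDest (α := α) x : Set (PUnit ⊕ (α × Nat1Inf × Nat1Inf))) =
        {s | ∃ u : PUnit, s = Sum.inl u} ∪
        {s | ∃ (a : α) (n₀ n₁ : Nat1Inf),
          s = Sum.inr (a, n₀, n₁) ∧
          1 + (n₀ : WithTop ℕ) + (n₁ : WithTop ℕ) ≤ (x : WithTop ℕ)} := by
  intro x
  ext s
  simp only [Set.mem_union, Set.mem_setOf_eq]
  constructor
  · intro hs
    simp only [treeDest, LowerSet.coe_sSup, Set.mem_iUnion, Set.mem_setOf_eq, SetLike.mem_coe] at hs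
    obtain ⟨X, hX, hsX⟩ := hs
    cases s with
    | inl u => exact Or.inl ⟨u, rfl⟩
    | inr p =>
      obtain ⟨a, n₀, n₁⟩ := p
      refine Or.inr ⟨a, n₀, n₁, rfl, ?_⟩
      have h1 : (n₀ : WithTop ℕ) + n₁ ≤ treeSize X :=
        le_iSup₂_of_le (n₀, n₁) ⟨a, hsX⟩ le_rfl
      calc 1 + (n₀ : WithTop ℕ) + n₁ = 1 + ((n₀ : WithTop ℕ) + n₁) := add_assoc _ _ _
        _ ≤ 1 + treeSize X := by gcongr
        _ ≤ (x : WithTop ℕ) := hX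
  · rintro (⟨u, rfl⟩ | ⟨a, n₀, n₁, rfl, h⟩)
    · simp only [treeDest, LowerSet.coe_sSup, Set.mem_iUnion, Set.mem_setOf_eq, SetLike.mem_coe]
      refine ⟨LowerSet.Iic (Sum.inl u), ?_, LowerSet.mem_Iic_iff.mpr le_rfl⟩
      have hsz : treeSize (α := α) (LowerSet.Iic (Sum.inl u)) = 0 := by
        simp [treeSize]
      show (1 : WithTop ℕ) + treeSize _ ≤ (x : WithTop ℕ)
      rw [hsz, add_zero]; exact x.2
    · simp only [treeDest, LowerSet.coe_sSup, Set.mem_iUnion, Set.mem_setOf_eq, SetLike.mem_coe]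
      refine ⟨LowerSet.Iic (Sum.inr (a, n₀, n₁)), ?_, LowerSet.mem_Iic_iff.mpr le_rfl⟩
      show (1 : WithTop ℕ) + treeSize _ ≤ (x : WithTop ℕ)
      have hsz : treeSize (α := α) (LowerSet.Iic (Sum.inr (a, n₀, n₁)))
          ≤ (n₀ : WithTop ℕ) + n₁ := by
        refine iSup₂_le fun p hp => ?_
        obtain ⟨a', ha'⟩ := hp
        simp only [LowerSet.mem_Iic_iff, Sum.inr_le_inr_iff, Prod.mk_le_mk] at ha'
        exact add_le_add ha'.2.1 ha'.2.2
      calc (1 : WithTop ℕ) + treeSize _ ≤ 1 + ((n₀ : WithTop ℕ) + n₁) := by gcongr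
        _ = 1 + (n₀ : WithTop ℕ) + n₁ := (add_assoc _ _ _).symm
        _ ≤ (x : WithTop ℕ) := h
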